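/- arXiv:2209.08407 — 2 statements merged into one kernel-verified Lean document; each statement's English description precedes it below -/
import Mathlib

section
/- Let c : ℝ^d × ℝ^d → [0,∞] be a nonnegative lower semicontinuous cost, and suppose W² : P(ℝ^d)² → [0,∞] is jointly convex and jointly lower semicontinuous with respect to narrow convergence, with W²(δ_x, δ_y) = c(x,y). Then for all probability measures μ, ν on ℝ^d, W²(μ,ν) ≤ inf_{π ∈ Π(μ,ν)} ∫ c(x,y) dπ(x,y), where Π(μ,ν) is the set of couplings of μ and ν. (Disintegration inequality: proved via the strong law of large numbers applied to empirical measures of i.i.d. samples from an arbitrary coupling, combined with joint convexity and lower semicontinuity.) -/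
open MeasureTheory Filter Set
open scoped ENNReal NNReal Topology


lemma finite_convexity {X : Type*} [MeasurableSpace X]
    (W : Measure X → Measure X → ℝ≥0∞)
    (hconvex : ∀ (a b : ℝ≥0∞) (ρ₀ ρ₀' ρ₁ ρ₁' : Measure X), a + b = 1 →
      W (a • ρ₀ + b • ρ₀') (a • ρ₁ + b • ρ₁') ≤ a * W ρ₀ ρ₁ + b * W ρ₀' ρ₁') :
    ∀ (s : Finset ℕ) (a : ℕ → ℝ≥0∞) (ρ σ : ℕ → Measure X), (∑ i ∈ s, a i) = 1 →
      W (∑ i ∈ s, a i • ρ i) (∑ i ∈ s, a i • σ i) ≤ ∑ i ∈ s, a i * W (ρ i) (σ i) := by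
  intro s
  induction s using Finset.cons_induction with
  | empty => intro a ρ σ h; simp at h
  | cons i s hi ih =>
    intro a ρ σ h
    rw [Finset.sum_cons] at h
    set b := ∑ j ∈ s, a j with hb
    have hble : b ≤ 1 := le_of_add_le_right h.le
    have hbne : b ≠ ⊤ := ne_top_of_le_ne_top ENNReal.one_ne_top hble
    rcases eq_or_ne b 0 with hb0 | hb0
    · have ha1 : a i = 1 := by rwa [hb0, add_zero] at h
      have hzρ : ∀ (τ : ℕ → Measure X), ∑ j ∈ s, a j • τ j = 0 := by
        intro τ
        refine Finset.sum_eq_zero fun j hj => ?_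
        have haj : a j = 0 := Finset.sum_eq_zero_iff.mp (hb.symm.trans hb0) j hj
        rw [haj, zero_smul]
      rw [Finset.sum_cons, Finset.sum_cons, Finset.sum_cons, hzρ, hzρ, add_zero, add_zero,
        ha1, one_smul, one_smul, one_mul]
      exact le_add_right le_rfl
    · have h1 : ∑ j ∈ s, (b⁻¹ * a j) = 1 := by
        rw [← Finset.mul_sum, ← hb, ENNReal.inv_mul_cancel hb0 hbne]
      have key := ih (fun j => b⁻¹ * a j) ρ σ h1
      have hmix := hconvex (a i) b (ρ i) (∑ j ∈ s, (b⁻¹ * a j) • ρ j)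
        (σ i) (∑ j ∈ s, (b⁻¹ * a j) • σ j) h
      have hsm : ∀ (τ : ℕ → Measure X), b • ∑ j ∈ s, (b⁻¹ * a j) • τ j = ∑ j ∈ s, a j • τ j := by
        intro τ
        rw [Finset.smul_sum]
        refine Finset.sum_congr rfl fun j hj => ?_
        rw [smul_smul, ← mul_assoc, ENNReal.mul_inv_cancel hb0 hbne, one_mul]
      rw [hsm, hsm] at hmix
      rw [Finset.sum_cons, Finset.sum_cons, Finset.sum_cons]
      refine hmix.trans ?_
      have hfin : b * W (∑ j ∈ s, (b⁻¹ * a j) • ρ j) (∑ j ∈ s, (b⁻¹ * a j) • σ j)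
          ≤ ∑ j ∈ s, a j * W (ρ j) (σ j) := by
        refine (mul_le_mul_right key b).trans ?_
        rw [Finset.mul_sum]
        refine le_of_eq (Finset.sum_congr rfl fun j hj => ?_)
        rw [← mul_assoc, ← mul_assoc, ENNReal.mul_inv_cancel hb0 hbne, one_mul]
      exact add_le_add_right hfin _


lemma tsum_split (f : ℕ → ℝ≥0∞) (s : Finset ℕ) :
    ∑' k, f k = (∑ k ∈ s, f k) + ∑' k, ((↑s : Set ℕ)ᶜ).indicator f k := by
  have h1 : ∑ k ∈ s, f k = ∑' k, ((↑s : Set ℕ)).indicator f k := by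
    rw [← tsum_subtype]
    exact (s.tsum_subtype f).symm
  rw [h1, ← ENNReal.tsum_add]
  congr 1
  funext k
  exact (Set.indicator_self_add_compl_apply (↑s : Set ℕ) f k).symm

lemma discretization {E : Type*} [MeasurableSpace E] [MetricSpace E]
    [OpensMeasurableSpace E] [SecondCountableTopology E] [Nonempty E]
    (π : Measure E) [IsProbabilityMeasure π] (h : E → ℝ≥0∞) (hmeas : Measurable h) :
    ∃ (M : ℕ → ℕ) (a : ℕ → ℕ → ℝ≥0∞) (z : ℕ → ℕ → E) (r : ℕ → ℝ≥0∞),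
      (∀ n, (∑ k ∈ Finset.range (M n), a n k) + r n = 1) ∧
      (∀ n, r n ≤ 2⁻¹ ^ n) ∧
      (∀ n, (∑ k ∈ Finset.range (M n), a n k * h (z n k)) ≤ ∫⁻ w, h w ∂π + 2⁻¹ ^ n * 2) ∧
      (∀ (zs : E) (P : ℕ → ProbabilityMeasure E),
        (∀ n, (P n : Measure E) =
          (∑ k ∈ Finset.range (M n), a n k • Measure.dirac (z n k)) + r n • Measure.dirac zs) →
        ∀ (Q : ProbabilityMeasure E), (Q : Measure E) = π →
        Tendsto P atTop (𝓝 Q)) := by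
  classical
  set u : ℕ → E := TopologicalSpace.denseSeq E with hu
  have hdense := TopologicalSpace.denseRange_denseSeq E
  -- the balls and the disjointified partition
  set B : ℕ → ℕ → Set E := fun n k => Metric.ball (u k) (1 / (n + 1 : ℝ)) with hB
  set A : ℕ → ℕ → Set E := fun n k => B n k \ ⋃ (j : ℕ) (_ : j < k), B n j with hA
  have hApos : ∀ n : ℕ, (0 : ℝ) < 1 / (n + 1 : ℝ) := by
    intro n; positivity
  have hcov : ∀ (n : ℕ) (w : E), ∃ k, w ∈ B n k := by
    intro n w
    obtain ⟨k, hk⟩ := hdense.exists_dist_lt w (hApos n)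
    exact ⟨k, by simpa [hB, Metric.mem_ball, dist_comm] using hk⟩
  have hAmeas : ∀ n k, MeasurableSet (A n k) := by
    intro n k
    exact (measurableSet_ball).diff (MeasurableSet.iUnion fun j =>
      (MeasurableSet.iUnion fun _ => measurableSet_ball))
  -- the index of the piece containing w
  set idx : ℕ → E → ℕ := fun n w => Nat.find (hcov n w) with hidx
  have hmem : ∀ n w, w ∈ A n (idx n w) := by
    intro n w
    refine ⟨Nat.find_spec (hcov n w), ?_⟩
    simp only [Set.mem_iUnion, not_exists]
    intro j hj
    exact Nat.find_min (hcov n w) hj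
  have huniq : ∀ n w k, w ∈ A n k → k = idx n w := by
    intro n w k hk
    have hle : idx n w ≤ k := Nat.find_min' (hcov n w) hk.1
    rcases lt_or_eq_of_le hle with hlt | heq
    · exfalso
      have := hk.2
      simp only [Set.mem_iUnion, not_exists] at this
      exact this (idx n w) hlt (Nat.find_spec (hcov n w))
    · exact heq.symm
  have hdisj : ∀ n, Pairwise (Function.onFun Disjoint (A n)) := by
    intro n k k' hkk'
    refine Set.disjoint_left.mpr fun w hw hw' => ?_
    exact hkk' ((huniq n w k hw).trans (huniq n w k' hw').symm)
  have hAunion : ∀ n, (⋃ k, A n k) = Set.univ := by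
    intro n
    refine Set.eq_univ_of_forall fun w => Set.mem_iUnion.mpr ⟨idx n w, hmem n w⟩
  -- choice of representative points
  have hzex : ∀ n k : ℕ, ∃ w : E, ((A n k).Nonempty → w ∈ A n k) ∧
      π (A n k) * h w ≤ (∫⁻ x in A n k, h x ∂π) + 2⁻¹ ^ (n + k) := by
    intro n k
    by_cases hne : (A n k).Nonempty
    · have hnesub : Nonempty (A n k) := hne.to_subtype
      set m : ℝ≥0∞ := ⨅ w : A n k, h w with hm
      have hint : m * π (A n k) ≤ ∫⁻ x in A n k, h x ∂π := by
        rw [← lintegral_indicator (hAmeas n k)]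
        have : ∫⁻ x, (A n k).indicator (fun _ => m) x ∂π ≤
            ∫⁻ x, (A n k).indicator h x ∂π := by
          refine lintegral_mono fun x => ?_
          by_cases hx : x ∈ A n k
          · simpa [Set.indicator_of_mem hx] using iInf_le (fun w : A n k => h w) ⟨x, hx⟩
          · simp [Set.indicator_of_notMem hx]
        rw [lintegral_indicator (hAmeas n k), setLIntegral_const] at this
        exact this
      by_cases hmtop : m = ⊤
      · refine ⟨hne.choose, fun _ => hne.choose_spec, ?_⟩
        have hw : h hne.choose = ⊤ := by
          have := iInf_le (fun w : A n k => h w) ⟨hne.choose, hne.choose_spec⟩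
          rw [← hm, hmtop] at this
          exact top_le_iff.mp this
        calc π (A n k) * h hne.choose = m * π (A n k) := by rw [hw, hmtop, mul_comm]
        _ ≤ ∫⁻ x in A n k, h x ∂π := hint
        _ ≤ _ := le_self_add
      · have hlt : m < m + 2⁻¹ ^ (n + k) := by
          refine ENNReal.lt_add_right hmtop ?_
          exact pow_ne_zero _ (ENNReal.inv_ne_zero.mpr ENNReal.ofNat_ne_top)
        obtain ⟨⟨w, hwA⟩, hwlt⟩ := iInf_lt_iff.mp hlt
        refine ⟨w, fun _ => hwA, ?_⟩
        calc π (A n k) * h w ≤ π (A n k) * (m + 2⁻¹ ^ (n + k)) :=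
              mul_le_mul_right hwlt.le _
        _ = π (A n k) * m + π (A n k) * 2⁻¹ ^ (n + k) := mul_add _ _ _
        _ ≤ (∫⁻ x in A n k, h x ∂π) + 2⁻¹ ^ (n + k) := by
              refine add_le_add ?_ ?_
              · rw [mul_comm]; exact hint
              · calc π (A n k) * 2⁻¹ ^ (n + k) ≤ 1 * 2⁻¹ ^ (n + k) :=
                      mul_le_mul_left prob_le_one _
                _ = 2⁻¹ ^ (n + k) := one_mul _
    · refine ⟨Classical.arbitrary E, fun hcon => absurd hcon hne, ?_⟩
      rw [Set.not_nonempty_iff_eq_empty.mp hne]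
      simp
  choose z hz1 hz2 using hzex
  set a : ℕ → ℕ → ℝ≥0∞ := fun n k => π (A n k) with ha
  have hsum1 : ∀ n, ∑' k, a n k = 1 := by
    intro n
    rw [← measure_iUnion (hdisj n) (hAmeas n), hAunion n, measure_univ]
  -- choice of truncation
  have hMex : ∀ n : ℕ, ∃ N, 1 - 2⁻¹ ^ n ≤ ∑ k ∈ Finset.range N, a n k := by
    intro n
    have hlt : (1 : ℝ≥0∞) - 2⁻¹ ^ n < 1 := by
      refine ENNReal.sub_lt_self ENNReal.one_ne_top one_ne_zero ?_
      exact pow_ne_zero _ (ENNReal.inv_ne_zero.mpr ENNReal.ofNat_ne_top)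
    have := (ENNReal.tendsto_nat_tsum (a n)).eventually (eventually_gt_nhds (by
      rw [hsum1 n] at *; exact hlt))
    obtain ⟨N, hN⟩ := this.exists
    exact ⟨N, hN.le⟩
  choose M hM using hMex
  set r : ℕ → ℝ≥0∞ := fun n => 1 - ∑ k ∈ Finset.range (M n), a n k with hr
  have hpartle : ∀ n, (∑ k ∈ Finset.range (M n), a n k) ≤ 1 := by
    intro n
    rw [← hsum1 n]
    exact ENNReal.sum_le_tsum _
  have hC1 : ∀ n, (∑ k ∈ Finset.range (M n), a n k) + r n = 1 := by
    intro n
    exact add_tsub_cancel_of_le (hpartle n)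
  have hC2 : ∀ n, r n ≤ 2⁻¹ ^ n := by
    intro n
    rw [hr]
    rw [tsub_le_iff_right]
    calc (1 : ℝ≥0∞) = 2⁻¹ ^ n + (1 - 2⁻¹ ^ n) := by
          rw [add_tsub_cancel_of_le]
          exact pow_le_one' (by simp [ENNReal.inv_le_one]) n
    _ ≤ 2⁻¹ ^ n + ∑ k ∈ Finset.range (M n), a n k := add_le_add_right (hM n) _
  refine ⟨M, a, z, r, hC1, hC2, ?_, ?_⟩
  · -- cost bound
    intro n
    calc ∑ k ∈ Finset.range (M n), a n k * h (z n k)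
        ≤ ∑ k ∈ Finset.range (M n), ((∫⁻ x in A n k, h x ∂π) + (2⁻¹ : ℝ≥0∞) ^ (n + k)) :=
          Finset.sum_le_sum fun k _ => hz2 n k
      _ = (∑ k ∈ Finset.range (M n), ∫⁻ x in A n k, h x ∂π)
            + ∑ k ∈ Finset.range (M n), (2⁻¹ : ℝ≥0∞) ^ (n + k) := Finset.sum_add_distrib
      _ ≤ (∫⁻ w, h w ∂π) + 2⁻¹ ^ n * 2 := by
          refine add_le_add ?_ ?_
          · calc (∑ k ∈ Finset.range (M n), ∫⁻ x in A n k, h x ∂π)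
                ≤ ∑' k, ∫⁻ x in A n k, h x ∂π := ENNReal.sum_le_tsum _
              _ = ∫⁻ x in ⋃ k, A n k, h x ∂π :=
                  (lintegral_iUnion (hAmeas n) (hdisj n) h).symm
              _ = ∫⁻ w, h w ∂π := by rw [hAunion n, Measure.restrict_univ]
          · calc (∑ k ∈ Finset.range (M n), (2⁻¹ : ℝ≥0∞) ^ (n + k))
                = ∑ k ∈ Finset.range (M n), (2⁻¹ : ℝ≥0∞) ^ n * (2⁻¹ : ℝ≥0∞) ^ k := by
                  refine Finset.sum_congr rfl fun k _ => pow_add _ _ _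
              _ = (2⁻¹ : ℝ≥0∞) ^ n * ∑ k ∈ Finset.range (M n), (2⁻¹ : ℝ≥0∞) ^ k := by
                  rw [Finset.mul_sum]
              _ ≤ (2⁻¹ : ℝ≥0∞) ^ n * ∑' k : ℕ, (2⁻¹ : ℝ≥0∞) ^ k :=
                  mul_le_mul_right (ENNReal.sum_le_tsum _) _
              _ = (2⁻¹ : ℝ≥0∞) ^ n * 2 := by
                  rw [ENNReal.tsum_geometric, ENNReal.one_sub_inv_two, inv_inv]
  · -- narrow convergence
    intro zs P hP Q hQ
    rw [MeasureTheory.ProbabilityMeasure.tendsto_iff_forall_lintegral_tendsto]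
    intro f
    set F : E → ℝ≥0∞ := fun w => (f w : ℝ≥0∞) with hF
    have hFmeas : Measurable F :=
      measurable_coe_nnreal_ennreal.comp f.continuous.measurable
    set C : ℝ≥0∞ := ((nndist f (0 : BoundedContinuousFunction E ℝ≥0) : ℝ≥0) : ℝ≥0∞) with hCdef
    have hFbound : ∀ w, F w ≤ C := fun w =>
      ENNReal.coe_le_coe.mpr (BoundedContinuousFunction.NNReal.upper_bound f w)
    have hCne : C ≠ ⊤ := ENNReal.coe_ne_top
    -- the approximating functions
    set g : ℕ → E → ℝ≥0∞ := fun n w => ∑' k, (A n k).indicator (fun _ => F (z n k)) w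
      with hg
    have hgmeas : ∀ n, Measurable (g n) := by
      intro n
      exact Measurable.ennreal_tsum fun k => Measurable.indicator measurable_const (hAmeas n k)
    have hgeq : ∀ n w, g n w = F (z n (idx n w)) := by
      intro n w
      rw [hg]
      simp only
      rw [tsum_eq_single (idx n w) ?_]
      · rw [Set.indicator_of_mem (hmem n w)]
      · intro k hk
        exact Set.indicator_of_notMem (fun hwk => hk (huniq n w k hwk)) _
    have hgle : ∀ n w, g n w ≤ C := fun n w => by rw [hgeq n w]; exact hFbound _
    have hztendsto : ∀ w : E, Tendsto (fun n => z n (idx n w)) atTop (𝓝 w) := by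
      intro w
      rw [tendsto_iff_dist_tendsto_zero]
      have hub : ∀ n, dist (z n (idx n w)) w ≤ 2 * (1 / (n + 1 : ℝ)) := by
        intro n
        have h1 : z n (idx n w) ∈ A n (idx n w) := hz1 n _ ⟨w, hmem n w⟩
        have h2 : w ∈ B n (idx n w) := (hmem n w).1
        have h1' : z n (idx n w) ∈ B n (idx n w) := h1.1
        calc dist (z n (idx n w)) w
            ≤ dist (z n (idx n w)) (u (idx n w)) + dist w (u (idx n w)) :=
              dist_triangle_right _ _ _
        _ ≤ 1 / (n + 1 : ℝ) + 1 / (n + 1 : ℝ) :=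
              add_le_add (le_of_lt (Metric.mem_ball.mp h1')) (le_of_lt (Metric.mem_ball.mp h2))
        _ = 2 * (1 / (n + 1 : ℝ)) := by ring
      refine squeeze_zero (fun n => dist_nonneg) hub ?_
      have h2 := tendsto_one_div_add_atTop_nhds_zero_nat.const_mul (2 : ℝ)
      simpa using h2
    have hgtendsto : ∀ w : E, Tendsto (fun n => g n w) atTop (𝓝 (F w)) := by
      intro w
      have hcont : Continuous F := ENNReal.continuous_coe.comp f.continuous
      exact Tendsto.congr (fun n => (hgeq n w).symm) ((hcont.tendsto w).comp (hztendsto w))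
    have hG : Tendsto (fun n => ∫⁻ w, g n w ∂π) atTop (𝓝 (∫⁻ w, F w ∂π)) := by
      refine tendsto_lintegral_of_dominated_convergence (fun _ => C) hgmeas
        (fun n => ae_of_all _ (hgle n)) ?_ (ae_of_all _ hgtendsto)
      rw [lintegral_const, measure_univ, mul_one]
      exact hCne
    have hGeq : ∀ n, ∫⁻ w, g n w ∂π = ∑' k, a n k * F (z n k) := by
      intro n
      rw [hg]
      simp only
      rw [lintegral_tsum
        (fun k => (Measurable.indicator measurable_const (hAmeas n k)).aemeasurable)]
      congr 1
      funext k
      rw [lintegral_indicator (hAmeas n k), setLIntegral_const, mul_comm]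
    have hI : ∀ n, ∫⁻ w, F w ∂(P n : Measure E)
        = (∑ k ∈ Finset.range (M n), a n k * F (z n k)) + r n * F zs := by
      intro n
      rw [hP n, lintegral_add_measure, lintegral_finset_sum_measure]
      congr 1
      · refine Finset.sum_congr rfl fun k _ => ?_
        rw [lintegral_smul_measure, lintegral_dirac' _ hFmeas, smul_eq_mul]
      · rw [lintegral_smul_measure, lintegral_dirac' _ hFmeas, smul_eq_mul]
    have htail : ∀ n,
        ∑' k, ((↑(Finset.range (M n)) : Set ℕ)ᶜ).indicator (fun k => a n k * F (z n k)) k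
          ≤ C * r n := by
      intro n
      have h1 : ∀ k, ((↑(Finset.range (M n)) : Set ℕ)ᶜ).indicator
            (fun k => a n k * F (z n k)) k
          ≤ C * ((↑(Finset.range (M n)) : Set ℕ)ᶜ).indicator (a n) k := by
        intro k
        by_cases hk : k ∈ ((↑(Finset.range (M n)) : Set ℕ)ᶜ)
        · rw [Set.indicator_of_mem hk, Set.indicator_of_mem hk, mul_comm (a n k)]
          exact mul_le_mul_left (hFbound _) _
        · rw [Set.indicator_of_notMem hk, Set.indicator_of_notMem hk, mul_zero]
      calc ∑' k, ((↑(Finset.range (M n)) : Set ℕ)ᶜ).indicator (fun k => a n k * F (z n k)) k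
          ≤ ∑' k, C * ((↑(Finset.range (M n)) : Set ℕ)ᶜ).indicator (a n) k :=
            ENNReal.tsum_le_tsum h1
      _ = C * ∑' k, ((↑(Finset.range (M n)) : Set ℕ)ᶜ).indicator (a n) k :=
            ENNReal.tsum_mul_left
      _ = C * r n := by
          congr 1
          have hs := tsum_split (a n) (Finset.range (M n))
          rw [hsum1 n] at hs
          have hne : (∑ k ∈ Finset.range (M n), a n k) ≠ ⊤ :=
            (lt_of_le_of_lt (hpartle n) (by simp)).ne
          exact (ENNReal.add_right_inj hne).mp (hs.symm.trans (hC1 n).symm)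
    have hsplitn : ∀ n, ∑' k, a n k * F (z n k)
        = (∑ k ∈ Finset.range (M n), a n k * F (z n k))
          + ∑' k, ((↑(Finset.range (M n)) : Set ℕ)ᶜ).indicator (fun k => a n k * F (z n k)) k :=
      fun n => tsum_split _ _
    have hIle : ∀ n, (∫⁻ w, F w ∂(P n : Measure E)) ≤ (∫⁻ w, g n w ∂π) + C * r n := by
      intro n
      rw [hI n, hGeq n, hsplitn n]
      refine add_le_add le_self_add ?_
      calc r n * F zs ≤ r n * C := mul_le_mul_right (hFbound zs) _
      _ = C * r n := mul_comm _ _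
    have hGle : ∀ n, (∫⁻ w, g n w ∂π) ≤ (∫⁻ w, F w ∂(P n : Measure E)) + C * r n := by
      intro n
      rw [hI n, hGeq n, hsplitn n]
      exact add_le_add le_self_add (htail n)
    have herr : Tendsto (fun n => C * r n) atTop (𝓝 0) := by
      have h2 : Tendsto (fun n : ℕ => C * 2⁻¹ ^ n) atTop (𝓝 (C * 0)) :=
        ENNReal.Tendsto.const_mul
          (ENNReal.tendsto_pow_atTop_nhds_zero_of_lt_one
            (by norm_num)) (Or.inr hCne)
      rw [mul_zero] at h2
      exact tendsto_of_tendsto_of_tendsto_of_le_of_le tendsto_const_nhds h2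
        (fun n => zero_le) (fun n => mul_le_mul_right (hC2 n) C)
    have hupper : Tendsto (fun n => (∫⁻ w, g n w ∂π) + C * r n) atTop
        (𝓝 (∫⁻ w, F w ∂π)) := by
      have := hG.add herr
      rwa [add_zero] at this
    have hlower : Tendsto (fun n => (∫⁻ w, g n w ∂π) - C * r n) atTop
        (𝓝 (∫⁻ w, F w ∂π)) := by
      have := ENNReal.Tendsto.sub hG herr (Or.inr (by simp))
      rwa [tsub_zero] at this
    have hfinal : Tendsto (fun n => ∫⁻ w, F w ∂(P n : Measure E)) atTop
        (𝓝 (∫⁻ w, F w ∂π)) :=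
      tendsto_of_tendsto_of_tendsto_of_le_of_le hlower hupper
        (fun n => tsub_le_iff_right.mpr (hGle n)) hIle
    rw [hQ]
    exact hfinal


lemma map_dirac_sum {E X : Type*} [MeasurableSpace E] [MeasurableSpace X]
    {φ : E → X} (hφ : Measurable φ) (s : Finset ℕ) (a : ℕ → ℝ≥0∞) (z : ℕ → E)
    (b : ℝ≥0∞) (w : E) :
    ((∑ k ∈ s, a k • Measure.dirac (z k)) + b • Measure.dirac w).map φ
      = (∑ k ∈ s, a k • Measure.dirac (φ (z k))) + b • Measure.dirac (φ w) := by
  rw [Measure.map_add _ _ hφ, Measure.map_smul, Measure.map_dirac' hφ]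
  congr 1
  induction s using Finset.cons_induction with
  | empty => simp
  | cons i s hi ih =>
    rw [Finset.sum_cons, Finset.sum_cons, Measure.map_add _ _ hφ, Measure.map_smul,
      Measure.map_dirac' hφ, ih]

/-- Disintegration inequality: if `W²` is jointly convex, jointly lower
semicontinuous with respect to narrow convergence of probability measures,
and agrees with the lower semicontinuous cost `c` on pairs of Dirac masses,
then `W²(μ,ν) ≤ ∫ c dπ` for every coupling `π` of `μ` and `ν`. -/
theorem disintegration_inequality (d : ℕ)
    (c : EuclideanSpace ℝ (Fin d) → EuclideanSpace ℝ (Fin d) → ℝ≥0∞)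
    (hc : LowerSemicontinuous
      (fun p : EuclideanSpace ℝ (Fin d) × EuclideanSpace ℝ (Fin d) => c p.1 p.2))
    (W : Measure (EuclideanSpace ℝ (Fin d)) →
         Measure (EuclideanSpace ℝ (Fin d)) → ℝ≥0∞)
    (hconvex : ∀ (a b : ℝ≥0∞)
        (ρ₀ ρ₀' ρ₁ ρ₁' : Measure (EuclideanSpace ℝ (Fin d))), a + b = 1 →
      W (a • ρ₀ + b • ρ₀') (a • ρ₁ + b • ρ₁') ≤ a * W ρ₀ ρ₁ + b * W ρ₀' ρ₁')
    (hlsc : ∀ (μn νn : ℕ → ProbabilityMeasure (EuclideanSpace ℝ (Fin d)))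
        (μ ν : ProbabilityMeasure (EuclideanSpace ℝ (Fin d))),
      Tendsto μn atTop (𝓝 μ) → Tendsto νn atTop (𝓝 ν) →
      W (μ : Measure (EuclideanSpace ℝ (Fin d))) (ν : Measure (EuclideanSpace ℝ (Fin d))) ≤
        Filter.liminf (fun n => W (μn n : Measure (EuclideanSpace ℝ (Fin d)))
          (νn n : Measure (EuclideanSpace ℝ (Fin d)))) atTop)
    (hdirac : ∀ x y, W (Measure.dirac x) (Measure.dirac y) = c x y)
    (μ ν : ProbabilityMeasure (EuclideanSpace ℝ (Fin d)))
    (π : Measure (EuclideanSpace ℝ (Fin d) × EuclideanSpace ℝ (Fin d)))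
    (hπ1 : π.map Prod.fst = (μ : Measure (EuclideanSpace ℝ (Fin d))))
    (hπ2 : π.map Prod.snd = (ν : Measure (EuclideanSpace ℝ (Fin d)))) :
    W (μ : Measure (EuclideanSpace ℝ (Fin d)))
        (ν : Measure (EuclideanSpace ℝ (Fin d))) ≤
      ∫⁻ p, c p.1 p.2 ∂π := by
  classical
  rcases eq_or_ne (∫⁻ p, c p.1 p.2 ∂π) ⊤ with htop | htop
  · rw [htop]; exact le_top
  have hπuniv : π Set.univ = 1 := by
    have h1 : π.map Prod.fst Set.univ = 1 := by rw [hπ1]; exact measure_univ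
    rwa [Measure.map_apply measurable_fst MeasurableSet.univ, Set.preimage_univ] at h1
  haveI : IsProbabilityMeasure π := ⟨hπuniv⟩
  set h : (EuclideanSpace ℝ (Fin d) × EuclideanSpace ℝ (Fin d)) → ℝ≥0∞ :=
    fun p => c p.1 p.2 with hh
  have hmeas : Measurable h := hc.measurable
  obtain ⟨zs, hzs⟩ : ∃ zs : EuclideanSpace ℝ (Fin d) × EuclideanSpace ℝ (Fin d),
      h zs ≠ ⊤ := by
    by_contra hcon
    push_neg at hcon
    apply htop
    calc ∫⁻ p, c p.1 p.2 ∂π = ∫⁻ _, ⊤ ∂π := lintegral_congr fun p => hcon p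
    _ = ⊤ := by simp [hπuniv]
  obtain ⟨M, a, z, r, hC1, hC2, hC3, hC4⟩ := discretization π h hmeas
  have hPprob : ∀ n, IsProbabilityMeasure
      ((∑ k ∈ Finset.range (M n), a n k • Measure.dirac (z n k)) + r n • Measure.dirac zs) := by
    intro n
    constructor
    rw [Measure.add_apply, Measure.finset_sum_apply]
    simp only [Measure.smul_apply, measure_univ, smul_eq_mul, mul_one]
    exact hC1 n
  set P : ℕ → ProbabilityMeasure (EuclideanSpace ℝ (Fin d) × EuclideanSpace ℝ (Fin d)) :=
    fun n => ⟨_, hPprob n⟩ with hPdef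
  have hP : ∀ n, (P n : Measure (EuclideanSpace ℝ (Fin d) × EuclideanSpace ℝ (Fin d)))
      = (∑ k ∈ Finset.range (M n), a n k • Measure.dirac (z n k)) + r n • Measure.dirac zs :=
    fun n => rfl
  set Q : ProbabilityMeasure (EuclideanSpace ℝ (Fin d) × EuclideanSpace ℝ (Fin d)) :=
    ⟨π, inferInstance⟩ with hQdef
  have hPQ := hC4 zs P hP Q rfl
  -- push forward to the marginals
  have hμlim : Tendsto (fun n => (P n).map continuous_fst.measurable.aemeasurable)
      atTop (𝓝 μ) := by
    have hcont := (MeasureTheory.ProbabilityMeasure.continuous_map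
      (continuous_fst : Continuous (Prod.fst : EuclideanSpace ℝ (Fin d) ×
        EuclideanSpace ℝ (Fin d) → EuclideanSpace ℝ (Fin d)))).tendsto Q
    have := hcont.comp hPQ
    have hQμ : Q.map continuous_fst.measurable.aemeasurable = μ :=
      ProbabilityMeasure.toMeasure_injective (by
        rw [ProbabilityMeasure.toMeasure_map]; exact hπ1)
    rwa [hQμ] at this
  have hνlim : Tendsto (fun n => (P n).map continuous_snd.measurable.aemeasurable)
      atTop (𝓝 ν) := by
    have hcont := (MeasureTheory.ProbabilityMeasure.continuous_map
      (continuous_snd : Continuous (Prod.snd : EuclideanSpace ℝ (Fin d) ×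
        EuclideanSpace ℝ (Fin d) → EuclideanSpace ℝ (Fin d)))).tendsto Q
    have := hcont.comp hPQ
    have hQν : Q.map continuous_snd.measurable.aemeasurable = ν :=
      ProbabilityMeasure.toMeasure_injective (by
        rw [ProbabilityMeasure.toMeasure_map]; exact hπ2)
    rwa [hQν] at this
  have hkey := hlsc _ _ μ ν hμlim hνlim
  refine hkey.trans ?_
  -- bound each term of the liminf
  have hterm : ∀ n, W ((P n).map continuous_fst.measurable.aemeasurable :
        Measure (EuclideanSpace ℝ (Fin d)))
      ((P n).map continuous_snd.measurable.aemeasurable :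
        Measure (EuclideanSpace ℝ (Fin d)))
      ≤ (∫⁻ p, c p.1 p.2 ∂π) + 2⁻¹ ^ n * (2 + h zs) := by
    intro n
    set a' : ℕ → ℝ≥0∞ := fun k => if k < M n then a n k else r n with ha'
    set x' : ℕ → EuclideanSpace ℝ (Fin d) :=
      fun k => if k < M n then (z n k).1 else zs.1 with hx'
    set y' : ℕ → EuclideanSpace ℝ (Fin d) :=
      fun k => if k < M n then (z n k).2 else zs.2 with hy'
    have hsum' : (∑ k ∈ Finset.range (M n + 1), a' k) = 1 := by
      rw [Finset.sum_range_succ]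
      rw [ha']
      simp only [lt_irrefl, if_neg, if_false]
      rw [Finset.sum_congr rfl (fun k hk => if_pos (Finset.mem_range.mp hk))]
      exact hC1 n
    have hmapfst : ((P n).map continuous_fst.measurable.aemeasurable :
          Measure (EuclideanSpace ℝ (Fin d)))
        = ∑ k ∈ Finset.range (M n + 1), a' k • Measure.dirac (x' k) := by
      rw [ProbabilityMeasure.toMeasure_map, hP n,
        map_dirac_sum measurable_fst, Finset.sum_range_succ]
      congr 1
      · exact Finset.sum_congr rfl fun k hk => by
          rw [ha', hx']
          simp only [if_pos (Finset.mem_range.mp hk)]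
      · rw [ha', hx']
        simp only [lt_irrefl, if_neg, if_false]
    have hmapsnd : ((P n).map continuous_snd.measurable.aemeasurable :
          Measure (EuclideanSpace ℝ (Fin d)))
        = ∑ k ∈ Finset.range (M n + 1), a' k • Measure.dirac (y' k) := by
      rw [ProbabilityMeasure.toMeasure_map, hP n,
        map_dirac_sum measurable_snd, Finset.sum_range_succ]
      congr 1
      · exact Finset.sum_congr rfl fun k hk => by
          rw [ha', hy']
          simp only [if_pos (Finset.mem_range.mp hk)]
      · rw [ha', hy']
        simp only [lt_irrefl, if_neg, if_false]
    rw [hmapfst, hmapsnd]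
    have hconv := finite_convexity W hconvex (Finset.range (M n + 1)) a'
      (fun k => Measure.dirac (x' k)) (fun k => Measure.dirac (y' k)) hsum'
    refine hconv.trans ?_
    have hrhs : (∑ k ∈ Finset.range (M n + 1),
          a' k * W (Measure.dirac (x' k)) (Measure.dirac (y' k)))
        = (∑ k ∈ Finset.range (M n), a n k * h (z n k)) + r n * h zs := by
      rw [Finset.sum_range_succ]
      congr 1
      · refine Finset.sum_congr rfl fun k hk => ?_
        have hklt := Finset.mem_range.mp hk
        rw [ha', hx', hy']
        simp only [if_pos hklt]
        rw [hdirac]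
      · rw [ha', hx', hy']
        simp only [lt_irrefl, if_neg, if_false]
        rw [hdirac]
    rw [hrhs]
    calc (∑ k ∈ Finset.range (M n), a n k * h (z n k)) + r n * h zs
        ≤ ((∫⁻ w, h w ∂π) + 2⁻¹ ^ n * 2) + 2⁻¹ ^ n * h zs :=
          add_le_add (hC3 n) (mul_le_mul_left (hC2 n) _)
    _ = (∫⁻ w, h w ∂π) + 2⁻¹ ^ n * (2 + h zs) := by
          rw [mul_add, add_assoc]
  refine (Filter.liminf_le_liminf (Filter.Eventually.of_forall hterm)).trans ?_
  have hlim : Tendsto (fun n : ℕ => (∫⁻ p, c p.1 p.2 ∂π) + 2⁻¹ ^ n * (2 + h zs))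
      atTop (𝓝 ((∫⁻ p, c p.1 p.2 ∂π) + 0)) := by
    refine Tendsto.add tendsto_const_nhds ?_
    have hK : (2 : ℝ≥0∞) + h zs ≠ ⊤ := by
      simp [ENNReal.add_ne_top, hzs]
    have := ENNReal.Tendsto.mul_const
      (ENNReal.tendsto_pow_atTop_nhds_zero_of_lt_one
        (show (2⁻¹ : ℝ≥0∞) < 1 by norm_num)) (Or.inr hK)
    rwa [zero_mul] at this
  rw [add_zero] at hlim
  exact hlim.liminf_eq.le
end

section
/- Let η : (0,∞) → [0,∞) with finite fourth moment, and let ζ̄_ε be the normalized kernel ζ̄_ε(x) = (d/(ε²M₂(η))) ∫_{|x|}^∞ s η_ε(s) ds (a probability density on ℝ^d). Then for every probability measure μ on ℝ^d with finite second moment, W₂(μ, ζ̄_ε * μ) ≤ ((d/(d+2)) · M₄(η)/M₂(η))^{1/2} · ε. -/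
open MeasureTheory
open scoped ENNReal

section WassersteinZetaAux

open Set Metric

noncomputable section

lemma aux_nontrivial (d : ℕ) (hd : 0 < d) : Nontrivial (EuclideanSpace ℝ (Fin d)) := by
  have : 0 < Module.finrank ℝ (EuclideanSpace ℝ (Fin d)) := by
    simpa [finrank_euclideanSpace_fin] using hd
  exact Module.nontrivial_of_finrank_pos this

lemma aux_polar (d : ℕ) (hd : 0 < d) (g : ℝ → ℝ≥0∞) (hg : Measurable g) :
    ∫⁻ x : EuclideanSpace ℝ (Fin d), g ‖x‖ =
      ((d : ℝ≥0∞) * volume (ball (0 : EuclideanSpace ℝ (Fin d)) 1)) *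
        ∫⁻ r in Ioi (0 : ℝ), ENNReal.ofReal (r ^ (d - 1)) * g r := by
  haveI := aux_nontrivial d hd
  set E := EuclideanSpace ℝ (Fin d) with hE
  have hdim : Module.finrank ℝ E = d := finrank_euclideanSpace_fin
  calc
    ∫⁻ x : E, g ‖x‖ = ∫⁻ x in ({0}ᶜ : Set E), g ‖x‖ := by
      rw [MeasureTheory.restrict_compl_singleton]
    _ = ∫⁻ x : ({0}ᶜ : Set E), ((g ∘ Subtype.val) ∘ Prod.snd) ((homeomorphUnitSphereProd E) x)
        ∂((volume : Measure E).comap Subtype.val) := by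
      rw [← lintegral_subtype_comap (measurableSet_singleton (0:E)).compl
        (fun x : E => g ‖x‖)]
      refine lintegral_congr fun x => ?_
      simp [homeomorphUnitSphereProd_apply_snd_coe]
    _ = ∫⁻ p : sphere (0:E) 1 × Ioi (0:ℝ), ((g ∘ Subtype.val) ∘ Prod.snd) p
        ∂((volume : Measure E).toSphere.prod (.volumeIoiPow (Module.finrank ℝ E - 1))) := by
      exact (volume : Measure E).measurePreserving_homeomorphUnitSphereProd.lintegral_comp
        ((hg.comp measurable_subtype_coe).comp measurable_snd)
    _ = ((volume : Measure E).toSphere univ) *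
        ∫⁻ r : Ioi (0:ℝ), (g ∘ Subtype.val) r ∂(Measure.volumeIoiPow (Module.finrank ℝ E - 1)) := by
      rw [lintegral_prod _ (((hg.comp measurable_subtype_coe).comp measurable_snd).aemeasurable)]
      simp [lintegral_const, mul_comm]
    _ = ((d : ℝ≥0∞) * volume (ball (0 : E) 1)) *
        ∫⁻ r in Ioi (0 : ℝ), ENNReal.ofReal (r ^ (d - 1)) * g r := by
      rw [Measure.toSphere_apply_univ, hdim]
      congr 1
      rw [Measure.volumeIoiPow, lintegral_withDensity_eq_lintegral_mul _
        (by fun_prop) (hg.comp measurable_subtype_coe)]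
      rw [← lintegral_subtype_comap measurableSet_Ioi
        (fun r : ℝ => ENNReal.ofReal (r ^ (d - 1)) * g r)]
      rfl

lemma aux_Ioo_pow (m : ℕ) (s : ℝ) (hs : 0 < s) :
    ∫⁻ r in Ioo (0:ℝ) s, ENNReal.ofReal (r ^ m) =
      ENNReal.ofReal (s ^ (m+1) / (m+1)) := by
  have hint : IntegrableOn (fun r : ℝ => r ^ m) (Ioo 0 s) := by
    exact (intervalIntegrable_iff_integrableOn_Ioo_of_le hs.le).1
      (intervalIntegral.intervalIntegrable_pow m)
  rw [← ofReal_integral_eq_lintegral_ofReal hint]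
  · congr 1
    rw [← integral_Ioc_eq_integral_Ioo, ← intervalIntegral.integral_of_le hs.le,
      integral_pow]
    simp
  · filter_upwards [ae_restrict_mem measurableSet_Ioo] with r hr
    exact pow_nonneg hr.1.le m

lemma aux_ball (d : ℕ) (hd : 0 < d) (j : ℕ) (s : ℝ) (hs : 0 < s) :
    ∫⁻ x in ball (0 : EuclideanSpace ℝ (Fin d)) s, ENNReal.ofReal (‖x‖ ^ j) =
      ((d : ℝ≥0∞) * volume (ball (0 : EuclideanSpace ℝ (Fin d)) 1)) *
        ENNReal.ofReal (s ^ (d + j) / (d + j)) := by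
  set E := EuclideanSpace ℝ (Fin d)
  set g : ℝ → ℝ≥0∞ := (Iio s).indicator (fun r => ENNReal.ofReal (r ^ j)) with hg
  have hgm : Measurable g := Measurable.indicator (by fun_prop) measurableSet_Iio
  have h1 : ∫⁻ x in ball (0 : E) s, ENNReal.ofReal (‖x‖ ^ j) = ∫⁻ x : E, g ‖x‖ := by
    rw [← lintegral_indicator measurableSet_ball]
    refine lintegral_congr fun x => ?_
    by_cases hx : x ∈ ball (0:E) s
    · rw [indicator_of_mem hx, hg, indicator_of_mem (by simpa [mem_ball_zero_iff] using hx)]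
    · rw [indicator_of_notMem hx, hg,
        indicator_of_notMem (by simpa [mem_ball_zero_iff] using hx)]
  rw [h1, aux_polar d hd g hgm]
  congr 1
  have h2 : ∀ r : ℝ, ENNReal.ofReal (r ^ (d-1)) * g r =
      (Iio s).indicator (fun r => ENNReal.ofReal (r ^ (d-1)) * ENNReal.ofReal (r ^ j)) r := by
    intro r
    by_cases hr : r ∈ Iio s
    · rw [hg, indicator_of_mem hr, indicator_of_mem hr]
    · rw [hg, indicator_of_notMem hr, indicator_of_notMem hr, mul_zero]
  calc ∫⁻ r in Ioi (0:ℝ), ENNReal.ofReal (r ^ (d-1)) * g r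
      = ∫⁻ r in Ioi (0:ℝ) ∩ Iio s,
          ENNReal.ofReal (r ^ (d-1)) * ENNReal.ofReal (r ^ j) := by
        rw [lintegral_congr h2, lintegral_indicator measurableSet_Iio,
          Measure.restrict_restrict measurableSet_Iio, Set.inter_comm]
    _ = ∫⁻ r in Ioo (0:ℝ) s, ENNReal.ofReal (r ^ (d - 1 + j)) := by
        rw [Ioi_inter_Iio]
        refine setLIntegral_congr_fun measurableSet_Ioo ?_
        intro r hr
        dsimp only
        rw [← ENNReal.ofReal_mul (pow_nonneg hr.1.le _), ← pow_add]
    _ = ENNReal.ofReal (s ^ (d + j) / (d + j)) := by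
        rw [aux_Ioo_pow _ s hs, show d - 1 + j + 1 = d + j from by omega]
        congr 2
        push_cast [Nat.cast_sub (Nat.one_le_iff_ne_zero.2 hd.ne')]
        ring

lemma aux_scale (d : ℕ) (k : ℕ) (f : ℝ → ℝ) (hf : Measurable f)
    (ε : ℝ) (hε : 0 < ε) :
    ∫⁻ y : EuclideanSpace ℝ (Fin d), ENNReal.ofReal (‖y‖ ^ k * f (‖y‖ / ε)) =
      ENNReal.ofReal (ε ^ (d + k)) *
        ∫⁻ y : EuclideanSpace ℝ (Fin d), ENNReal.ofReal (‖y‖ ^ k * f ‖y‖) := by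
  set E := EuclideanSpace ℝ (Fin d)
  set F : E → ℝ≥0∞ := fun y => ENNReal.ofReal (‖y‖ ^ k * f ‖y‖) with hF
  have hFm : Measurable F := by fun_prop
  have hdim : Module.finrank ℝ E = d := finrank_euclideanSpace_fin
  have hmap : Measure.map (ε⁻¹ • · : E → E) volume
      = ENNReal.ofReal (ε ^ d) • (volume : Measure E) := by
    rw [Measure.map_addHaar_smul (volume : Measure E) (inv_ne_zero hε.ne'), hdim]
    congr 2
    rw [abs_of_pos (by positivity)]
    field_simp
    rw [one_div, inv_pow, inv_mul_cancel₀ (by positivity)]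
  have key : ∫⁻ y : E, F (ε⁻¹ • y) = ENNReal.ofReal (ε ^ d) * ∫⁻ y : E, F y := by
    rw [← lintegral_map hFm (by fun_prop : Measurable (ε⁻¹ • · : E → E)), hmap,
      lintegral_smul_measure, smul_eq_mul]
  have hpt : ∀ y : E, F (ε⁻¹ • y) =
      ENNReal.ofReal (ε⁻¹ ^ k) * ENNReal.ofReal (‖y‖ ^ k * f (‖y‖ / ε)) := by
    intro y
    have hnorm : ‖ε⁻¹ • y‖ = ‖y‖ / ε := by
      rw [norm_smul, norm_inv, Real.norm_eq_abs, abs_of_pos hε, div_eq_inv_mul]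
    rw [hF]
    simp only [hnorm]
    rw [← ENNReal.ofReal_mul (by positivity)]
    congr 1
    rw [div_pow, div_eq_inv_mul, mul_assoc]
    ring
  calc ∫⁻ y : E, ENNReal.ofReal (‖y‖ ^ k * f (‖y‖ / ε))
      = ENNReal.ofReal (ε ^ k) * ∫⁻ y : E, F (ε⁻¹ • y) := by
        rw [lintegral_congr hpt, lintegral_const_mul _ (by fun_prop), ← mul_assoc,
          ← ENNReal.ofReal_mul (by positivity)]
        rw [show ε ^ k * ε⁻¹ ^ k = 1 by rw [← mul_pow, mul_inv_cancel₀ hε.ne', one_pow], ENNReal.ofReal_one, one_mul]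
    _ = ENNReal.ofReal (ε ^ (d + k)) * ∫⁻ y : E, F y := by
        rw [key, ← mul_assoc, ← ENNReal.ofReal_mul (by positivity), ← pow_add, add_comm]

lemma aux_swap (d : ℕ) (j : ℕ) (G : ℝ → ℝ≥0∞) (hG : Measurable G) :
    ∫⁻ x : EuclideanSpace ℝ (Fin d), ENNReal.ofReal (‖x‖ ^ j) * ∫⁻ s in Ioi ‖x‖, G s =
      ∫⁻ s in Ioi (0:ℝ), G s *
        ∫⁻ x in ball (0 : EuclideanSpace ℝ (Fin d)) s, ENNReal.ofReal (‖x‖ ^ j) := by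
  set E := EuclideanSpace ℝ (Fin d)
  set F : E × ℝ → ℝ≥0∞ := fun p =>
    if ‖p.1‖ < p.2 then ENNReal.ofReal (‖p.1‖ ^ j) * G p.2 else 0 with hFdef
  have hFm : Measurable F := by
    apply Measurable.ite _ (by fun_prop) measurable_const
    exact measurableSet_lt (by fun_prop) (by fun_prop)
  have step1 : ∀ x : E, ENNReal.ofReal (‖x‖ ^ j) * ∫⁻ s in Ioi ‖x‖, G s =
      ∫⁻ s : ℝ, F (x, s) := by
    intro x
    rw [← lintegral_const_mul _ hG, ← lintegral_indicator measurableSet_Ioi]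
    refine lintegral_congr fun s => ?_
    by_cases hs : ‖x‖ < s
    · rw [indicator_of_mem (by exact hs), hFdef]; simp [hs]
    · rw [indicator_of_notMem (by exact hs), hFdef]; simp [hs]
  have step2 : ∀ s : ℝ, (∫⁻ x : E, F (x, s)) =
      G s * ∫⁻ x in ball (0:E) s, ENNReal.ofReal (‖x‖ ^ j) := by
    intro s
    rw [← lintegral_const_mul _ (by fun_prop), ← lintegral_indicator measurableSet_ball]
    refine lintegral_congr fun x => ?_
    by_cases hx : ‖x‖ < s
    · rw [indicator_of_mem (by simpa [mem_ball_zero_iff] using hx), hFdef]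
      simp [hx, mul_comm]
    · rw [indicator_of_notMem (by simpa [mem_ball_zero_iff] using hx), hFdef]
      simp [hx]
  calc ∫⁻ x : E, ENNReal.ofReal (‖x‖ ^ j) * ∫⁻ s in Ioi ‖x‖, G s
      = ∫⁻ x : E, ∫⁻ s : ℝ, F (x, s) := lintegral_congr step1
    _ = ∫⁻ s : ℝ, ∫⁻ x : E, F (x, s) := lintegral_lintegral_swap hFm.aemeasurable
    _ = ∫⁻ s : ℝ, G s * ∫⁻ x in ball (0:E) s, ENNReal.ofReal (‖x‖ ^ j) :=
        lintegral_congr step2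
    _ = ∫⁻ s in Ioi (0:ℝ), G s * ∫⁻ x in ball (0:E) s, ENNReal.ofReal (‖x‖ ^ j) := by
        rw [← lintegral_indicator measurableSet_Ioi]
        refine lintegral_congr fun s => ?_
        rw [eq_comm, indicator_apply_eq_self]
        intro hs
        rw [ball_eq_empty.2 (by simpa using hs)]
        simp

/-- The main moment computation. -/
lemma aux_main (d : ℕ) (hd : 0 < d) (j : ℕ) (η : ℝ → ℝ) (hη : Measurable η)
    (hnonneg : ∀ r : ℝ, 0 < r → 0 ≤ η r) (ε : ℝ) (hε : 0 < ε) :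
    ∫⁻ x : EuclideanSpace ℝ (Fin d), ENNReal.ofReal (‖x‖ ^ j) *
        ∫⁻ s in Ioi ‖x‖, ENNReal.ofReal (s * (ε ^ (-(d:ℤ)) * η (s / ε))) =
      ENNReal.ofReal (ε ^ (j + 2) / (d + j)) *
        ∫⁻ y : EuclideanSpace ℝ (Fin d), ENNReal.ofReal (‖y‖ ^ (j + 2) * η ‖y‖) := by
  set E := EuclideanSpace ℝ (Fin d)
  set G : ℝ → ℝ≥0∞ := fun s => ENNReal.ofReal (s * (ε ^ (-(d:ℤ)) * η (s / ε))) with hGdef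
  have hGm : Measurable G := by fun_prop
  set σ : ℝ≥0∞ := (d : ℝ≥0∞) * volume (ball (0 : E) 1) with hσ
  have hεd : (0:ℝ) < ε ^ (-(d:ℤ)) := zpow_pos hε _
  -- the 1-d radial integral
  set R : ℝ≥0∞ := ∫⁻ s in Ioi (0:ℝ), ENNReal.ofReal (s ^ (d + j + 1) * η (s / ε)) with hR
  have hstep1 : ∫⁻ x : E, ENNReal.ofReal (‖x‖ ^ j) * ∫⁻ s in Ioi ‖x‖, G s =
      σ * (ENNReal.ofReal (ε ^ (-(d:ℤ)) / (d + j)) * R) := by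
    rw [aux_swap d j G hGm]
    have : ∀ s ∈ Ioi (0:ℝ), G s * ∫⁻ x in ball (0:E) s, ENNReal.ofReal (‖x‖ ^ j) =
        σ * (ENNReal.ofReal (ε ^ (-(d:ℤ)) / (d + j)) *
          ENNReal.ofReal (s ^ (d + j + 1) * η (s / ε))) := by
      intro s hs
      rw [aux_ball d hd j s hs, hGdef]
      rw [show G s * (σ * ENNReal.ofReal (s ^ (d + j) / (d + j))) =
        σ * (G s * ENNReal.ofReal (s ^ (d + j) / (d + j))) from by ring]
      congr 1
      have hs' : (0:ℝ) < s := hs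
      have hη' : (0:ℝ) ≤ η (s / ε) := hnonneg _ (div_pos hs' hε)
      rw [hGdef, ← ENNReal.ofReal_mul (mul_nonneg hs'.le (mul_nonneg hεd.le hη'))]
      rw [← ENNReal.ofReal_mul (by positivity)]
      congr 1
      have : (0:ℝ) < (d:ℝ) + j := by positivity
      field_simp
      ring
    rw [setLIntegral_congr_fun measurableSet_Ioi this,
      lintegral_const_mul _ (by fun_prop), lintegral_const_mul _ (by fun_prop)]
  have hstep2 : σ * R = ENNReal.ofReal (ε ^ (d + j + 2)) *
      ∫⁻ y : E, ENNReal.ofReal (‖y‖ ^ (j + 2) * η ‖y‖) := by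
    have hpolar := aux_polar d hd
      (fun r => ENNReal.ofReal (r ^ (j + 2) * η (r / ε))) (by fun_prop)
    have hscale := aux_scale d (j + 2) η hη ε hε
    rw [show d + (j + 2) = d + j + 2 from by ring] at hscale
    rw [← hscale, hpolar]
    congr 1
    refine (setLIntegral_congr_fun measurableSet_Ioi ?_)
    intro r hr
    have hr' : (0:ℝ) < r := hr
    dsimp only
    rw [← ENNReal.ofReal_mul (pow_nonneg hr'.le _)]
    congr 1
    rw [← mul_assoc, ← pow_add, show d - 1 + (j + 2) = d + j + 1 from by omega]
  have hpow : ε ^ (-(d:ℤ)) * ε ^ (d + j + 2) = ε ^ (j + 2) := by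
    rw [← zpow_natCast ε (d + j + 2), ← zpow_add₀ hε.ne', ← zpow_natCast ε (j + 2)]
    congr 1; push_cast; ring
  rw [hstep1, ← mul_assoc, mul_comm σ, mul_assoc, hstep2, ← mul_assoc,
    ← ENNReal.ofReal_mul (by positivity)]
  congr 1
  rw [div_mul_eq_mul_div, hpow]

lemma aux_alg (d : ℕ) (eps m2 m4 : ℝ) (heps : 0 < eps) (hm2 : 0 < m2) :
    (d : ℝ) / (eps ^ 2 * m2) * (eps ^ 4 / (d + 2) * m4) =
      ((d : ℝ) / (d + 2)) * (m4 / m2) * eps ^ 2 := by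
  have h1 : ((d:ℝ) + 2) ≠ 0 := by positivity
  field_simp

noncomputable def W2sq {d : ℕ}
    (μ ν : Measure (EuclideanSpace ℝ (Fin d))) : ℝ≥0∞ :=
  ⨅ (π : Measure (EuclideanSpace ℝ (Fin d) × EuclideanSpace ℝ (Fin d)))
    (_ : π.map Prod.fst = μ) (_ : π.map Prod.snd = ν),
    ∫⁻ p, ENNReal.ofReal (‖p.1 - p.2‖ ^ 2) ∂π

/-- `W₂(μ, ζ̄_ε * μ) ≤ ((d/(d+2)) M₄(η)/M₂(η))^{1/2} ε` for the normalized
kernel `ζ̄_ε(x) = (d/(ε² M₂(η))) ∫_{|x|}^∞ s η_ε(s) ds`, stated in the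
equivalent squared form. -/
theorem wasserstein_zeta_convolution_estimate (d : ℕ) (hd : 0 < d)
    (η : ℝ → ℝ) (hη : Measurable η) (hnonneg : ∀ r : ℝ, 0 < r → 0 ≤ η r)
    (htail : Integrable
      (fun y : EuclideanSpace ℝ (Fin d) => min 1 (‖y‖ ^ 2) * η ‖y‖))
    (hM2 : Integrable (fun y : EuclideanSpace ℝ (Fin d) => ‖y‖ ^ 2 * η ‖y‖))
    (hM2pos : 0 < ∫ y : EuclideanSpace ℝ (Fin d), ‖y‖ ^ 2 * η ‖y‖)
    (hM4 : Integrable (fun y : EuclideanSpace ℝ (Fin d) => ‖y‖ ^ 4 * η ‖y‖))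
    (ε : ℝ) (hε : 0 < ε)
    (ζε : EuclideanSpace ℝ (Fin d) → ℝ)
    (hζ : ∀ x, ζε x =
      ((d : ℝ) / (ε ^ 2 * ∫ y : EuclideanSpace ℝ (Fin d), ‖y‖ ^ 2 * η ‖y‖)) *
        ∫ s in Set.Ioi ‖x‖, s * (ε ^ (-(d : ℤ)) * η (s / ε)))
    (μ : Measure (EuclideanSpace ℝ (Fin d))) [IsProbabilityMeasure μ]
    (hμ2 : Integrable (fun x : EuclideanSpace ℝ (Fin d) => ‖x‖ ^ 2) μ) :
    W2sq μ
      ((volume : Measure (EuclideanSpace ℝ (Fin d))).withDensity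
        (fun x => ENNReal.ofReal (∫ y, ζε (x - y) ∂μ))) ≤
      ENNReal.ofReal (((d : ℝ) / (d + 2)) *
        ((∫ y : EuclideanSpace ℝ (Fin d), ‖y‖ ^ 4 * η ‖y‖) /
          (∫ y : EuclideanSpace ℝ (Fin d), ‖y‖ ^ 2 * η ‖y‖)) * ε ^ 2) := by
  haveI := aux_nontrivial d hd
  let E := EuclideanSpace ℝ (Fin d)
  set M2 : ℝ := ∫ y : E, ‖y‖ ^ 2 * η ‖y‖ with hM2def
  set M4 : ℝ := ∫ y : E, ‖y‖ ^ 4 * η ‖y‖ with hM4def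
  set c : ℝ := (d : ℝ) / (ε ^ 2 * M2) with hcdef
  have hc : 0 ≤ c := by positivity
  set h : ℝ → ℝ := fun s => s * (ε ^ (-(d:ℤ)) * η (s / ε)) with hhdef
  have hhm : Measurable h := by fun_prop
  have hεd : (0:ℝ) < ε ^ (-(d:ℤ)) := zpow_pos hε _
  have hhnn : ∀ s : ℝ, 0 < s → 0 ≤ h s := fun s hs =>
    mul_nonneg hs.le (mul_nonneg hεd.le (hnonneg _ (div_pos hs hε)))
  set Φ : ℝ → ℝ≥0∞ := fun t => ∫⁻ s in Ioi t, ENNReal.ofReal (h s) with hΦdef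
  have hΦm : Measurable Φ := by
    have : Φ = fun t => ∫⁻ s, (if t < s then ENNReal.ofReal (h s) else 0) := by
      funext t
      show (∫⁻ s in Ioi t, ENNReal.ofReal (h s)) = _
      rw [← lintegral_indicator measurableSet_Ioi]
      exact lintegral_congr fun s => by by_cases hs : t < s <;> simp [indicator, hs]
    rw [this]
    exact Measurable.lintegral_prod_right'
      (f := fun p : ℝ × ℝ => if p.1 < p.2 then ENNReal.ofReal (h p.2) else 0)
      (Measurable.ite (measurableSet_lt measurable_fst measurable_snd) (by fun_prop)
        measurable_const)
  set ζ : E → ℝ≥0∞ := fun x => ENNReal.ofReal c * Φ ‖x‖ with hζdef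
  have hζm : Measurable ζ := (hΦm.comp measurable_norm).const_mul _
  -- nonnegativity a.e. of the η-moment integrands
  have hae0 : ∀ᵐ y : E ∂volume, y ≠ 0 := by
    filter_upwards [(countable_singleton (0:E)).ae_notMem volume] with y hy
    simpa using hy
  have hN2 : ∫⁻ y : E, ENNReal.ofReal (‖y‖ ^ (0 + 2) * η ‖y‖) = ENNReal.ofReal M2 := by
    rw [← ofReal_integral_eq_lintegral_ofReal hM2 ?_]
    filter_upwards [hae0] with y hy
    have : (0:ℝ) < ‖y‖ := norm_pos_iff.2 hy
    exact mul_nonneg (by positivity) (hnonneg _ this)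
  have hN4 : ∫⁻ y : E, ENNReal.ofReal (‖y‖ ^ (2 + 2) * η ‖y‖) = ENNReal.ofReal M4 := by
    rw [← ofReal_integral_eq_lintegral_ofReal hM4 ?_]
    filter_upwards [hae0] with y hy
    have : (0:ℝ) < ‖y‖ := norm_pos_iff.2 hy
    exact mul_nonneg (by positivity) (hnonneg _ this)
  -- total mass of the kernel
  have hT0 : ∫⁻ x : E, Φ ‖x‖ = ENNReal.ofReal (ε ^ 2 / d * M2) := by
    have := aux_main d hd 0 η hη hnonneg ε hε
    simp only [pow_zero, ENNReal.ofReal_one, one_mul] at this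
    rw [hΦdef]
    simp only [hhdef]
    rw [this, hN2, ← ENNReal.ofReal_mul (by positivity)]
    norm_num
  have hT2 : ∫⁻ x : E, ENNReal.ofReal (‖x‖ ^ 2) * Φ ‖x‖ =
      ENNReal.ofReal (ε ^ 4 / (d + 2) * M4) := by
    have := aux_main d hd 2 η hη hnonneg ε hε
    rw [hΦdef]
    simp only [hhdef]
    rw [this, hN4, ← ENNReal.ofReal_mul (by positivity)]
    norm_num
  have hmass : ∫⁻ x : E, ζ x = 1 := by
    rw [hζdef]
    simp only
    rw [lintegral_const_mul _ (show Measurable fun x : E => Φ ‖x‖ from hΦm.comp measurable_norm), hT0,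
      ← ENNReal.ofReal_mul hc]
    rw [show c * (ε ^ 2 / d * M2) = 1 from by
      rw [hcdef]; field_simp]
    exact ENNReal.ofReal_one
  -- finiteness of the radial moment integral
  set σ : ℝ≥0∞ := (d : ℝ≥0∞) * volume (ball (0 : E) 1) with hσdef
  have hσ0 : σ ≠ 0 := by
    rw [hσdef]
    exact mul_ne_zero (by exact_mod_cast hd.ne') (measure_ball_pos _ _ one_pos).ne'
  set R : ℝ≥0∞ := ∫⁻ s in Ioi (0:ℝ), ENNReal.ofReal (s ^ (d+1) * η (s / ε)) with hRdef
  have hσR : σ * R = ENNReal.ofReal (ε ^ (d + 2)) * ENNReal.ofReal M2 := by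
    have hpolar := aux_polar d hd (fun r => ENNReal.ofReal (r ^ 2 * η (r / ε))) (by fun_prop)
    have hscale := aux_scale d 2 η hη ε hε
    rw [show ∫⁻ y : E, ENNReal.ofReal (‖y‖ ^ 2 * η ‖y‖) = ENNReal.ofReal M2 from by
      simpa using hN2] at hscale
    rw [← hscale, hpolar, hσdef, hRdef]
    congr 1
    refine setLIntegral_congr_fun measurableSet_Ioi ?_
    intro r hr
    have hr' : (0:ℝ) < r := hr
    dsimp only
    rw [← ENNReal.ofReal_mul (pow_nonneg hr'.le _), ← mul_assoc, ← pow_add,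
      show d - 1 + 2 = d + 1 from by omega]
  have hRfin : R ≠ ⊤ := by
    intro hR
    rw [hR, ENNReal.mul_top hσ0] at hσR
    exact (ENNReal.mul_ne_top ENNReal.ofReal_ne_top ENNReal.ofReal_ne_top) hσR.symm
  -- integrability of h on tails
  have hint : ∀ t : ℝ, 0 < t → IntegrableOn h (Ioi t) volume := by
    intro t ht
    refine ⟨hhm.aestronglyMeasurable, ?_⟩
    rw [hasFiniteIntegral_iff_ofReal ?_]
    swap
    · filter_upwards [ae_restrict_mem measurableSet_Ioi] with s hs
      exact hhnn s (ht.trans hs)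
    have hbound : ∀ s ∈ Ioi t, ENNReal.ofReal (h s) ≤
        ENNReal.ofReal (ε ^ (-(d:ℤ)) / t ^ d) * ENNReal.ofReal (s ^ (d+1) * η (s / ε)) := by
      intro s hs
      have hs' : t < s := hs
      have hspos : (0:ℝ) < s := ht.trans hs'
      have hηs : (0:ℝ) ≤ η (s / ε) := hnonneg _ (div_pos hspos hε)
      rw [← ENNReal.ofReal_mul (by positivity)]
      refine ENNReal.ofReal_le_ofReal ?_
      have h1 : s * t ^ d ≤ s ^ (d+1) := by
        calc s * t ^ d ≤ s * s ^ d :=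
              mul_le_mul_of_nonneg_left (pow_le_pow_left₀ ht.le hs'.le d) hspos.le
          _ = s ^ (d+1) := by ring
      have h2 : s ≤ s ^ (d+1) / t ^ d := by
        rw [le_div_iff₀ (by positivity)]
        exact h1
      calc h s = (ε ^ (-(d:ℤ)) * η (s / ε)) * s := by rw [hhdef]; ring
        _ ≤ (ε ^ (-(d:ℤ)) * η (s / ε)) * (s ^ (d+1) / t ^ d) :=
            mul_le_mul_of_nonneg_left h2 (by positivity)
        _ = ε ^ (-(d:ℤ)) / t ^ d * (s ^ (d+1) * η (s / ε)) := by ring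
    calc ∫⁻ s in Ioi t, ENNReal.ofReal (h s)
        ≤ ∫⁻ s in Ioi t, ENNReal.ofReal (ε ^ (-(d:ℤ)) / t ^ d) *
            ENNReal.ofReal (s ^ (d+1) * η (s / ε)) :=
          setLIntegral_mono (by fun_prop) hbound
      _ = ENNReal.ofReal (ε ^ (-(d:ℤ)) / t ^ d) *
            ∫⁻ s in Ioi t, ENNReal.ofReal (s ^ (d+1) * η (s / ε)) := by
          rw [lintegral_const_mul _ (by fun_prop)]
      _ ≤ ENNReal.ofReal (ε ^ (-(d:ℤ)) / t ^ d) * R := by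
          gcongr
          rw [hRdef]
          exact lintegral_mono_set (Ioi_subset_Ioi ht.le)
      _ < ⊤ := ENNReal.mul_lt_top ENNReal.ofReal_lt_top hRfin.lt_top
  -- pointwise representation of the kernel
  have hrep : ∀ x : E, x ≠ 0 → ENNReal.ofReal (ζε x) = ζ x := by
    intro x hx
    have hnx : (0:ℝ) < ‖x‖ := norm_pos_iff.2 hx
    rw [hζ x, ENNReal.ofReal_mul hc, hζdef]
    congr 1
    rw [ofReal_integral_eq_lintegral_ofReal (hint ‖x‖ hnx) ?_]
    filter_upwards [ae_restrict_mem measurableSet_Ioi] with s hs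
    exact hhnn s (hnx.trans hs)
  have hζεnn : ∀ z : E, 0 ≤ ζε z := by
    intro z
    rw [hζ z]
    refine mul_nonneg hc (setIntegral_nonneg measurableSet_Ioi fun s hs => ?_)
    exact hhnn s ((norm_nonneg z).trans_lt hs)
  have haeeq : (fun x : E => ENNReal.ofReal (ζε x)) =ᵐ[volume] ζ := by
    filter_upwards [hae0] with x hx using hrep x hx
  -- the smoothing measure
  set ρ : Measure E := volume.withDensity ζ with hρdef
  haveI hρprob : IsProbabilityMeasure ρ := by
    constructor
    rw [hρdef, withDensity_apply _ MeasurableSet.univ, Measure.restrict_univ]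
    exact hmass
  -- the convolution identity
  set g' : E → ℝ≥0∞ := fun w => ∫⁻ x, ζ (w - x) ∂μ with hg'def
  have hg'm : Measurable g' := by
    refine Measurable.lintegral_prod_right'
      (f := fun p : E × E => ζ (p.1 - p.2)) ?_
    exact hζm.comp (measurable_fst.sub measurable_snd)
  have hconv : (μ.prod ρ).map (fun p : E × E => p.1 + p.2) = volume.withDensity g' := by
    refine Measure.ext fun A hA => ?_
    have haddm : Measurable (fun p : E × E => p.1 + p.2) := measurable_fst.add measurable_snd
    rw [Measure.map_apply haddm hA, Measure.prod_apply (haddm hA)]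
    have hx : ∀ x : E, ρ (Prod.mk x ⁻¹' ((fun p : E × E => p.1 + p.2) ⁻¹' A)) =
        ∫⁻ w in A, ζ (w - x) := by
      intro x
      have hset : (Prod.mk x ⁻¹' ((fun p : E × E => p.1 + p.2) ⁻¹' A)) =
          (fun z : E => x + z) ⁻¹' A := rfl
      rw [hset, hρdef, withDensity_apply _ (hA.preimage (measurable_const_add x)),
        ← lintegral_indicator (hA.preimage (measurable_const_add x))]
      have hpt : ∀ z : E, ((fun z : E => x + z) ⁻¹' A).indicator ζ z =
          (A.indicator fun w => ζ (w - x)) (x + z) := by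
        intro z
        by_cases hz : x + z ∈ A
        · rw [indicator_of_mem (by exact hz), indicator_of_mem hz, add_sub_cancel_left]
        · rw [indicator_of_notMem (by exact hz), indicator_of_notMem hz]
      rw [lintegral_congr hpt,
        lintegral_add_left_eq_self (A.indicator fun w => ζ (w - x)) x,
        lintegral_indicator hA]
    rw [lintegral_congr hx,
      lintegral_lintegral_swap (f := fun (x w : E) => ζ (w - x))
        ((hζm.comp (measurable_snd.sub measurable_fst)).aemeasurable),
      withDensity_apply _ hA]
  -- identification of the density
  have hdens : g' =ᵐ[volume]
      (fun x : E => ENNReal.ofReal (∫ y, ζε (x - y) ∂μ)) := by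
    have hatom : ∀ᵐ w : E ∂volume, μ {w} = 0 := by
      have hcnt : Set.Countable {w : E | 0 < μ {w}} :=
        Measure.countable_meas_pos_of_disjoint_iUnion
          (fun w : E => measurableSet_singleton w)
          (fun a b hab => by
            simp only [Function.onFun]
            exact disjoint_singleton.mpr hab)
      filter_upwards [hcnt.ae_notMem volume] with w hw
      simpa [not_lt, le_zero_iff] using hw
    have hfin : ∀ᵐ w : E ∂volume, g' w < ⊤ := by
      refine ae_lt_top hg'm ?_
      have hswap : ∫⁻ w, g' w ∂volume = ∫⁻ x : E, (∫⁻ w, ζ (w - x) ∂volume) ∂μ := by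
        rw [hg'def]
        exact lintegral_lintegral_swap
          ((hζm.comp (measurable_fst.sub measurable_snd)).aemeasurable)
      rw [hswap]
      have : ∀ x : E, (∫⁻ w, ζ (w - x) ∂volume) = 1 := by
        intro x
        rw [lintegral_sub_right_eq_self ζ x]
        exact hmass
      rw [lintegral_congr this, lintegral_one, measure_univ]
      exact ENNReal.one_ne_top
    filter_upwards [hatom, hfin] with w hw hfw
    have hwne : ∀ᵐ x ∂μ, x ≠ w := by
      have : {x : E | ¬ x ≠ w} = {w} := by ext x; simp
      rw [ae_iff, this, hw]
    have hae_shift : (fun x => ENNReal.ofReal (ζε (w - x))) =ᵐ[μ] (fun x => ζ (w - x)) := by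
      filter_upwards [hwne] with x hx
      exact hrep _ (sub_ne_zero.2 (Ne.symm hx))
    have hK : ∫⁻ x, ENNReal.ofReal (ζε (w - x)) ∂μ = g' w := lintegral_congr_ae hae_shift
    have hint2 : Integrable (fun x => ζε (w - x)) μ := by
      constructor
      · have hm : Measurable (fun x : E => (ζ (w - x)).toReal) :=
          ENNReal.measurable_toReal.comp (hζm.comp (measurable_const.sub measurable_id))
        refine hm.aestronglyMeasurable.congr ?_
        filter_upwards [hwne] with x hx
        rw [← hrep _ (sub_ne_zero.2 (Ne.symm hx)), ENNReal.toReal_ofReal (hζεnn _)]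
      · rw [hasFiniteIntegral_iff_ofReal (Filter.Eventually.of_forall fun x => hζεnn _)]
        rw [hK]
        exact hfw
    show g' w = ENNReal.ofReal (∫ y, ζε (w - y) ∂μ)
    rw [← hK]
    exact (ofReal_integral_eq_lintegral_ofReal hint2
      (Filter.Eventually.of_forall fun x => hζεnn _)).symm
  -- the coupling
  set T : E × E → E × E := fun p => (p.1, p.1 + p.2) with hTdef
  have hTm : Measurable T := measurable_fst.prodMk (measurable_fst.add measurable_snd)
  set π : Measure (E × E) := (μ.prod ρ).map T with hπdef
  have hfst : π.map Prod.fst = μ := by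
    rw [hπdef, Measure.map_map measurable_fst hTm]
    have : (Prod.fst ∘ T) = Prod.fst := rfl
    rw [this, Measure.map_fst_prod, measure_univ, one_smul]
  have hsnd : π.map Prod.snd = volume.withDensity
      (fun x => ENNReal.ofReal (∫ y, ζε (x - y) ∂μ)) := by
    rw [hπdef, Measure.map_map measurable_snd hTm]
    have : (Prod.snd ∘ T) = fun p : E × E => p.1 + p.2 := rfl
    rw [this, hconv]
    exact withDensity_congr_ae hdens
  have hcost : ∫⁻ p, ENNReal.ofReal (‖p.1 - p.2‖ ^ 2) ∂π =
      ENNReal.ofReal (c * (ε ^ 4 / (d + 2) * M4)) := by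
    rw [hπdef, lintegral_map (by fun_prop) hTm]
    have hpt : ∀ p : E × E, ENNReal.ofReal (‖(T p).1 - (T p).2‖ ^ 2) =
        ENNReal.ofReal (‖p.2‖ ^ 2) := by
      intro p
      rw [hTdef]
      simp only
      rw [show p.1 - (p.1 + p.2) = -p.2 from by abel, norm_neg]
    rw [lintegral_congr hpt,
      show ∫⁻ p : E × E, ENNReal.ofReal (‖p.2‖ ^ 2) ∂(μ.prod ρ)
          = ∫⁻ z, ENNReal.ofReal (‖z‖ ^ 2) ∂ρ from by
        rw [show (∫⁻ p : E × E, ENNReal.ofReal (‖p.2‖ ^ 2) ∂(μ.prod ρ))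
            = ∫⁻ z, ENNReal.ofReal (‖z‖ ^ 2) ∂((μ.prod ρ).map Prod.snd) from
          (lintegral_map (f := fun z : E => ENNReal.ofReal (‖z‖ ^ 2)) (by fun_prop)
            measurable_snd).symm, Measure.map_snd_prod, measure_univ, one_smul]]
    rw [hρdef, lintegral_withDensity_eq_lintegral_mul _ hζm (by fun_prop)]
    refine Eq.trans (lintegral_congr
      (g := fun z : E => ENNReal.ofReal c * (ENNReal.ofReal (‖z‖ ^ 2) * Φ ‖z‖)) ?_) ?_
    · intro z
      show ζ z * ENNReal.ofReal (‖z‖ ^ 2) = _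
      rw [hζdef]
      ring
    · rw [lintegral_const_mul _ (by
        exact (measurable_norm.pow_const 2).ennreal_ofReal.mul (hΦm.comp measurable_norm)),
        hT2, ← ENNReal.ofReal_mul hc]
  have hfinal : c * (ε ^ 4 / (d + 2) * M4) =
      ((d : ℝ) / (d + 2)) * (M4 / M2) * ε ^ 2 := by
    rw [hcdef]
    exact aux_alg d ε M2 M4 hε hM2pos
  calc W2sq μ (volume.withDensity (fun x => ENNReal.ofReal (∫ y, ζε (x - y) ∂μ)))
      ≤ ∫⁻ p, ENNReal.ofReal (‖p.1 - p.2‖ ^ 2) ∂π := by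
        unfold W2sq
        exact iInf_le_of_le π (iInf_le_of_le hfst (iInf_le_of_le hsnd le_rfl))
    _ = ENNReal.ofReal (((d : ℝ) / (d + 2)) * (M4 / M2) * ε ^ 2) := by
        rw [hcost, hfinal]

end
end WassersteinZetaAux
end
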